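/- Let μ be the uniform distribution on [-1, 1], t > 0, a₀ ∈ ℝ, v > 0. Then ∫ dμ(x)/((a₀-x)² + v²) = (arctan((1-a₀)/v) + arctan((1+a₀)/v))/(2v). Moreover, if this quantity equals 1/t and 2v/t < π, then a₀² = 2v·cot(2v/t) + 1 - v². -/

import Mathlib

open MeasureTheory
open scoped ENNReal

/-- For `μ` the uniform distribution on `[-1,1]`, `v > 0`:
`∫ dμ(x)/((a₀-x)²+v²) = (arctan((1-a₀)/v) + arctan((1+a₀)/v))/(2v)`, and if this equals
`1/t` with `2v/t < π` then `a₀² = 2v cot(2v/t) + 1 - v²`. -/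
theorem stmt_12 (t a₀ v : ℝ) (ht : 0 < t) (hv : 0 < v)
    (μ : Measure ℝ) (hμ : μ = (2 : ℝ≥0∞)⁻¹ • volume.restrict (Set.Icc (-1 : ℝ) 1)) :
    (∫ x, 1 / ((a₀ - x) ^ 2 + v ^ 2) ∂μ
      = (Real.arctan ((1 - a₀) / v) + Real.arctan ((1 + a₀) / v)) / (2 * v)) ∧
    ((∫ x, 1 / ((a₀ - x) ^ 2 + v ^ 2) ∂μ = 1 / t) → 2 * v / t < Real.pi →
      a₀ ^ 2 = 2 * v * Real.cot (2 * v / t) + 1 - v ^ 2) := by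
  have hv0 : v ≠ 0 := ne_of_gt hv
  have hcont : Continuous fun x : ℝ => 1 / ((a₀ - x) ^ 2 + v ^ 2) := by
    apply Continuous.div continuous_const
    · fun_prop
    · intro x
      positivity
  have hderiv : ∀ x : ℝ, HasDerivAt (fun y => Real.arctan ((y - a₀) / v) / v)
      (1 / ((a₀ - x) ^ 2 + v ^ 2)) x := by
    intro x
    have h1 : HasDerivAt (fun y : ℝ => (y - a₀) / v) (1 / v) x := by
      simpa using ((hasDerivAt_id x).sub_const a₀).div_const v
    have h2 := (Real.hasDerivAt_arctan ((x - a₀) / v)).comp x h1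
    have h3 := h2.div_const v
    refine h3.congr_deriv ?_
    have : 1 + ((x - a₀) / v) ^ 2 ≠ 0 := by positivity
    field_simp
    ring
  have hint : ∫ x in (-1 : ℝ)..1, 1 / ((a₀ - x) ^ 2 + v ^ 2)
      = (Real.arctan ((1 - a₀) / v) + Real.arctan ((1 + a₀) / v)) / v := by
    rw [intervalIntegral.integral_eq_sub_of_hasDerivAt (fun x _ => hderiv x)
      (hcont.intervalIntegrable _ _)]
    have hne : (-1 - a₀) / v = -((1 + a₀) / v) := by ring
    rw [hne, Real.arctan_neg]; ring
  have key : ∫ x, 1 / ((a₀ - x) ^ 2 + v ^ 2) ∂μ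
      = (Real.arctan ((1 - a₀) / v) + Real.arctan ((1 + a₀) / v)) / (2 * v) := by
    rw [hμ, integral_smul_measure]
    rw [MeasureTheory.integral_Icc_eq_integral_Ioc,
      ← intervalIntegral.integral_of_le (by norm_num : (-1 : ℝ) ≤ 1), hint]
    simp [ENNReal.toReal_inv]
    ring
  refine ⟨key, fun heq _ => ?_⟩
  set A := (1 - a₀) / v
  set B := (1 + a₀) / v
  have hS : 2 * v / t = Real.arctan A + Real.arctan B := by
    rw [key] at heq
    field_simp at heq ⊢
    linarith
  have hD1 : (0:ℝ) < Real.sqrt (1 + A ^ 2) := Real.sqrt_pos.2 (by positivity)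
  have hD2 : (0:ℝ) < Real.sqrt (1 + B ^ 2) := Real.sqrt_pos.2 (by positivity)
  have hAB : A + B = 2 / v := by simp only [A, B]; field_simp; ring
  have hcot : Real.cot (Real.arctan A + Real.arctan B) = (1 - A * B) / (A + B) := by
    rw [Real.cot_eq_cos_div_sin, Real.cos_add, Real.sin_add,
      Real.cos_arctan, Real.sin_arctan, Real.cos_arctan, Real.sin_arctan]
    rw [div_eq_div_iff]
    · field_simp
    · have : A + B > 0 := by rw [hAB]; positivity
      field_simp
      exact ne_of_gt (div_pos this (mul_pos hD1 hD2))
    · rw [hAB]; positivity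
  rw [hS, hcot, hAB]
  have hABm : 1 - A * B = (v ^ 2 - 1 + a₀ ^ 2) / v ^ 2 := by
    simp only [A, B]; field_simp; ring
  rw [hABm]
  field_simp
  ring
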